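/- Let B be a symmetric positive definite r×r real matrix, A an r×m real matrix, Σ a symmetric m×m real matrix with Σ − AᵀB⁻¹A positive definite, H an r×t real matrix, F an m×t real matrix, S a symmetric positive semidefinite t×t real matrix satisfying S·Fᵀ = S·Hᵀ·B⁻¹·A, and G an r×q real matrix. Let E = fromBlocks(B, A; Aᵀ, Σ) and let [G; 0] denote the (r+m)×q block-column matrix with upper block G and lower block the zero m×q matrix. Then the matrix E + [H; F]·S·[H; F]ᵀ is invertible and [G; 0]ᵀ · ( E + [H; F]·S·[H; F]ᵀ )⁻¹ · [H; F] · S · [H; F]ᵀ · E⁻¹ · [G; 0] = Gᵀ·(B + H·S·Hᵀ)⁻¹·H·S·Hᵀ·B⁻¹·G. -/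

import Mathlib

open Matrix

set_option maxHeartbeats 1000000 in
/-- Cross-gradient identity under the Markov condition:
`E + [H;F] S [H;F]ᵀ` is invertible and
`[G;0]ᵀ (E + [H;F] S [H;F]ᵀ)⁻¹ [H;F] S [H;F]ᵀ E⁻¹ [G;0] = Gᵀ (B + H S Hᵀ)⁻¹ H S Hᵀ B⁻¹ G`. -/
theorem stmt5 {r m t q : ℕ}
    (B : Matrix (Fin r) (Fin r) ℝ) (hB : B.PosDef)
    (A : Matrix (Fin r) (Fin m) ℝ)
    (Sg : Matrix (Fin m) (Fin m) ℝ) (hSg : Sg.IsSymm)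
    (hschur : (Sg - Aᵀ * B⁻¹ * A).PosDef)
    (H : Matrix (Fin r) (Fin t) ℝ) (F : Matrix (Fin m) (Fin t) ℝ)
    (S : Matrix (Fin t) (Fin t) ℝ) (hS : S.PosSemidef)
    (hMarkov : S * Fᵀ = S * Hᵀ * B⁻¹ * A)
    (G : Matrix (Fin r) (Fin q) ℝ)
    (E : Matrix (Fin r ⊕ Fin m) (Fin r ⊕ Fin m) ℝ)
    (hE : E = fromBlocks B A Aᵀ Sg) :
    IsUnit (E + fromRows H F * S * (fromRows H F)ᵀ) ∧
      (fromRows G (0 : Matrix (Fin m) (Fin q) ℝ))ᵀ *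
          (E + fromRows H F * S * (fromRows H F)ᵀ)⁻¹ *
          fromRows H F * S * (fromRows H F)ᵀ * E⁻¹ *
          fromRows G (0 : Matrix (Fin m) (Fin q) ℝ) =
        Gᵀ * (B + H * S * Hᵀ)⁻¹ * H * S * Hᵀ * B⁻¹ * G := by
  -- abbreviations
  set D : Matrix (Fin m) (Fin m) ℝ := Sg - Aᵀ * B⁻¹ * A with hD
  set M : Matrix (Fin r) (Fin r) ℝ := H * S * Hᵀ with hM
  set N : Matrix (Fin r) (Fin r) ℝ := B + M with hN
  -- basic facts
  have hBd : IsUnit B.det := hB.det_pos.ne'.isUnit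
  have hDd : IsUnit D.det := hschur.det_pos.ne'.isUnit
  have hSsym : Sᵀ = S := hS.isHermitian.eq
  have hBsym : Bᵀ = B := hB.isHermitian.eq
  have hBisym : B⁻¹ᵀ = B⁻¹ := by rw [transpose_nonsing_inv, hBsym]
  have hMpsd : M.PosSemidef := by
    simpa using hS.mul_mul_conjTranspose_same H
  have hNpd : N.PosDef := hB.add_posSemidef hMpsd
  have hNd : IsUnit N.det := hNpd.det_pos.ne'.isUnit
  have hMsym : Mᵀ = M := by
    simp [hM, transpose_mul, hSsym, Matrix.mul_assoc]
  -- Markov consequences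
  have hHF : H * S * Fᵀ = M * B⁻¹ * A := by
    rw [Matrix.mul_assoc, hMarkov]; simp [hM, Matrix.mul_assoc]
  have hFH : F * S * Hᵀ = Aᵀ * B⁻¹ * M := by
    have := congrArg transpose hHF
    simpa [transpose_mul, hSsym, hBisym, hMsym, Matrix.mul_assoc] using this
  have hFF : F * S * Fᵀ = Aᵀ * B⁻¹ * M * B⁻¹ * A := by
    have h1 : F * S * Fᵀ = F * S * Hᵀ * (B⁻¹ * A) := by
      rw [Matrix.mul_assoc F S Fᵀ, hMarkov]; simp only [Matrix.mul_assoc]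
    rw [h1, hFH]; simp only [Matrix.mul_assoc]
  -- block form of P
  have hP : fromRows H F * S * (fromRows H F)ᵀ =
      fromBlocks M (M * B⁻¹ * A) (Aᵀ * B⁻¹ * M) (Aᵀ * B⁻¹ * M * B⁻¹ * A) := by
    rw [transpose_fromRows, fromRows_mul, fromRows_mul_fromCols, hHF, hFH, hFF]
  set P := fromRows H F * S * (fromRows H F)ᵀ with hPdef
  have hSgD : Sg = D + Aᵀ * B⁻¹ * A := by rw [hD]; abel
  -- explicit inverse of E
  have h11 : B * (B⁻¹ + B⁻¹ * A * D⁻¹ * (Aᵀ * B⁻¹)) + A * -(D⁻¹ * (Aᵀ * B⁻¹)) = 1 := by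
    simp only [Matrix.mul_add, Matrix.mul_neg, ← Matrix.mul_assoc]
    simp only [Matrix.mul_nonsing_inv _ hBd, Matrix.one_mul]
    abel
  have h12 : B * -(B⁻¹ * A * D⁻¹) + A * D⁻¹ = 0 := by
    simp only [Matrix.mul_neg, ← Matrix.mul_assoc]
    simp only [Matrix.mul_nonsing_inv _ hBd, Matrix.one_mul]
    abel
  have h21 : Aᵀ * (B⁻¹ + B⁻¹ * A * D⁻¹ * (Aᵀ * B⁻¹)) + Sg * -(D⁻¹ * (Aᵀ * B⁻¹)) = 0 := by
    rw [hSgD]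
    simp only [Matrix.mul_add, Matrix.add_mul, Matrix.mul_neg, ← Matrix.mul_assoc]
    simp only [Matrix.mul_nonsing_inv _ hBd, Matrix.mul_nonsing_inv _ hDd, Matrix.one_mul]
    abel
  have h22 : Aᵀ * -(B⁻¹ * A * D⁻¹) + Sg * D⁻¹ = 1 := by
    rw [hSgD]
    simp only [Matrix.mul_add, Matrix.add_mul, Matrix.mul_neg, ← Matrix.mul_assoc]
    simp only [Matrix.mul_nonsing_inv _ hBd, Matrix.mul_nonsing_inv _ hDd, Matrix.one_mul]
    abel
  have hErinv : E * fromBlocks (B⁻¹ + B⁻¹ * A * D⁻¹ * (Aᵀ * B⁻¹)) (-(B⁻¹ * A * D⁻¹))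
      (-(D⁻¹ * (Aᵀ * B⁻¹))) D⁻¹ = 1 := by
    rw [hE, fromBlocks_multiply, h11, h12, h21, h22, fromBlocks_one]
  have hEd : IsUnit E.det := isUnit_det_of_right_inverse hErinv
  have hEinv : E⁻¹ = fromBlocks (B⁻¹ + B⁻¹ * A * D⁻¹ * (Aᵀ * B⁻¹)) (-(B⁻¹ * A * D⁻¹))
      (-(D⁻¹ * (Aᵀ * B⁻¹))) D⁻¹ := inv_eq_right_inv hErinv
  -- explicit inverse of E + P
  have hEP : E + P = fromBlocks N (A + M * B⁻¹ * A) (Aᵀ + Aᵀ * B⁻¹ * M)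
      (Sg + Aᵀ * B⁻¹ * M * B⁻¹ * A) := by
    rw [hE, hP, fromBlocks_add, hN]
  have hNBA : N * (B⁻¹ * A) = A + M * B⁻¹ * A := by
    rw [hN, Matrix.add_mul, Matrix.mul_nonsing_inv_cancel_left _ _ hBd]
    simp only [Matrix.mul_assoc]
  have hABN : Aᵀ * B⁻¹ * N = Aᵀ + Aᵀ * B⁻¹ * M := by
    rw [hN, Matrix.mul_add, Matrix.mul_assoc Aᵀ, Matrix.nonsing_inv_mul _ hBd, Matrix.mul_one]
  have k11 : N * (N⁻¹ + B⁻¹ * A * D⁻¹ * (Aᵀ * B⁻¹)) +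
      (A + M * B⁻¹ * A) * -(D⁻¹ * (Aᵀ * B⁻¹)) = 1 := by
    rw [← hNBA]
    simp only [Matrix.mul_add, Matrix.mul_neg, ← Matrix.mul_assoc]
    simp only [Matrix.mul_nonsing_inv _ hNd, Matrix.one_mul]
    abel
  have k12 : N * -(B⁻¹ * A * D⁻¹) + (A + M * B⁻¹ * A) * D⁻¹ = 0 := by
    rw [← hNBA]
    simp only [Matrix.mul_neg, ← Matrix.mul_assoc]
    abel
  have k21 : (Aᵀ + Aᵀ * B⁻¹ * M) * (N⁻¹ + B⁻¹ * A * D⁻¹ * (Aᵀ * B⁻¹)) +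
      (Sg + Aᵀ * B⁻¹ * M * B⁻¹ * A) * -(D⁻¹ * (Aᵀ * B⁻¹)) = 0 := by
    rw [← hABN, hSgD]
    simp only [Matrix.mul_add, Matrix.add_mul, Matrix.mul_neg, ← Matrix.mul_assoc]
    have e1 : Aᵀ * B⁻¹ * N * N⁻¹ = Aᵀ * B⁻¹ := by
      rw [Matrix.mul_assoc, Matrix.mul_nonsing_inv _ hNd, Matrix.mul_one]
    have e2 : Aᵀ * B⁻¹ * N * B⁻¹ * A * D⁻¹ * Aᵀ * B⁻¹
        = Aᵀ * B⁻¹ * A * D⁻¹ * Aᵀ * B⁻¹ + Aᵀ * B⁻¹ * M * B⁻¹ * A * D⁻¹ * Aᵀ * B⁻¹ := by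
      rw [hABN]; simp only [Matrix.add_mul]
    rw [e1, e2]
    simp only [Matrix.mul_nonsing_inv _ hDd, Matrix.one_mul]
    abel
  have k22 : (Aᵀ + Aᵀ * B⁻¹ * M) * -(B⁻¹ * A * D⁻¹) +
      (Sg + Aᵀ * B⁻¹ * M * B⁻¹ * A) * D⁻¹ = 1 := by
    rw [← hABN, hSgD]
    simp only [Matrix.mul_add, Matrix.add_mul, Matrix.mul_neg, ← Matrix.mul_assoc]
    have e2 : Aᵀ * B⁻¹ * N * B⁻¹ * A * D⁻¹
        = Aᵀ * B⁻¹ * A * D⁻¹ + Aᵀ * B⁻¹ * M * B⁻¹ * A * D⁻¹ := by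
      rw [hABN]; simp only [Matrix.add_mul]
    rw [e2]
    simp only [Matrix.mul_nonsing_inv _ hDd, Matrix.one_mul]
    abel
  have hEPrinv : (E + P) * fromBlocks (N⁻¹ + B⁻¹ * A * D⁻¹ * (Aᵀ * B⁻¹)) (-(B⁻¹ * A * D⁻¹))
      (-(D⁻¹ * (Aᵀ * B⁻¹))) D⁻¹ = 1 := by
    rw [hEP, fromBlocks_multiply, k11, k12, k21, k22, fromBlocks_one]
  have hEPd : IsUnit (E + P).det := isUnit_det_of_right_inverse hEPrinv
  have hEPu : IsUnit (E + P) := (Matrix.isUnit_iff_isUnit_det _).mpr hEPd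
  have hEPinv : (E + P)⁻¹ = fromBlocks (N⁻¹ + B⁻¹ * A * D⁻¹ * (Aᵀ * B⁻¹)) (-(B⁻¹ * A * D⁻¹))
      (-(D⁻¹ * (Aᵀ * B⁻¹))) D⁻¹ := inv_eq_right_inv hEPrinv
  refine ⟨hEPu, ?_⟩
  -- middle identity
  have hmid : (E + P)⁻¹ * P * E⁻¹ = E⁻¹ - (E + P)⁻¹ := by
    have hstep : (E + P)⁻¹ * P * E⁻¹ = (E + P)⁻¹ * ((E + P) - E) * E⁻¹ := by
      rw [add_sub_cancel_left]
    rw [hstep, Matrix.mul_sub, Matrix.sub_mul, Matrix.nonsing_inv_mul _ hEPd,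
      Matrix.mul_assoc, Matrix.mul_nonsing_inv _ hEd, Matrix.one_mul, Matrix.mul_one]
  have hblock : E⁻¹ - (E + P)⁻¹ = fromBlocks (B⁻¹ - N⁻¹) 0 0 0 := by
    rw [hEinv, hEPinv, sub_eq_add_neg, fromBlocks_neg, fromBlocks_add, fromBlocks_inj]
    refine ⟨by abel, by abel, by abel, by abel⟩
  -- reassociate LHS
  have hassoc : (fromRows G (0 : Matrix (Fin m) (Fin q) ℝ))ᵀ * (E + P)⁻¹ *
      fromRows H F * S * (fromRows H F)ᵀ * E⁻¹ * fromRows G (0 : Matrix (Fin m) (Fin q) ℝ)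
      = (fromRows G (0 : Matrix (Fin m) (Fin q) ℝ))ᵀ *
        ((E + P)⁻¹ * P * E⁻¹ * fromRows G (0 : Matrix (Fin m) (Fin q) ℝ)) := by
    simp only [hPdef, Matrix.mul_assoc]
  rw [hassoc, hmid, hblock, transpose_fromRows, transpose_zero]
  rw [show fromBlocks (B⁻¹ - N⁻¹) (0 : Matrix (Fin r) (Fin m) ℝ)
      (0 : Matrix (Fin m) (Fin r) ℝ) (0 : Matrix (Fin m) (Fin m) ℝ) * fromRows G (0 : Matrix (Fin m) (Fin q) ℝ)
      = fromRows ((B⁻¹ - N⁻¹) * G) (0 : Matrix (Fin m) (Fin q) ℝ) by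
    rw [fromBlocks_mul_fromRows]; simp]
  rw [fromCols_mul_fromRows]
  -- RHS
  have hrhs : N⁻¹ * M * B⁻¹ = B⁻¹ - N⁻¹ := by
    have hM' : M = N - B := by rw [hN]; abel
    rw [hM', Matrix.mul_sub, Matrix.sub_mul, Matrix.nonsing_inv_mul _ hNd,
      Matrix.mul_assoc, Matrix.mul_nonsing_inv _ hBd, Matrix.one_mul, Matrix.mul_one]
  calc Gᵀ * ((B⁻¹ - N⁻¹) * G) + (0 : Matrix (Fin q) (Fin m) ℝ) * (0 : Matrix (Fin m) (Fin q) ℝ)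
      = Gᵀ * ((B⁻¹ - N⁻¹) * G) := by simp
    _ = Gᵀ * (N⁻¹ * M * B⁻¹) * G := by rw [hrhs]; simp only [Matrix.mul_assoc]
    _ = Gᵀ * (B + H * S * Hᵀ)⁻¹ * H * S * Hᵀ * B⁻¹ * G := by
        simp only [hN, hM, Matrix.mul_assoc]
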